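/- Let ν be a Borel measure on ℝ whose support is bounded from below and which is a probability measure. Then max_{t∈[0,1)} P(ν)(t) = ∫_ℝ max(x,0) ν(dx). -/

import Mathlib

open MeasureTheory Set Filter Topology ENNReal

/-- `F_ν*(t) = sup { x | ν((x,∞)) > t }`. -/
noncomputable def Fstar (ν : Measure ℝ) (t : ℝ) : ℝ :=
  sSup {x : ℝ | t < (ν (Ioi x)).toReal}

/-- `P(ν)(t) = ∫₀ᵗ F_ν*(s) ds`. -/
noncomputable def Pfun (ν : Measure ℝ) (t : ℝ) : ℝ :=
  ∫ s in Ioc (0:ℝ) t, Fstar ν s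

/-- The maximal value of the polygon `P(ν)` over `[0,1)`. -/
noncomputable def Pmax (ν : Measure ℝ) : ℝ :=
  ⨆ t ∈ Ico (0:ℝ) 1, Pfun ν t

section Aux
variable (ν : Measure ℝ) [IsProbabilityMeasure ν] {m : ℝ} (hm : ν (Iio m) = 0)


lemma G_le_one (x : ℝ) : (ν (Ioi x)).toReal ≤ 1 := by
  rw [← ENNReal.toReal_one]
  exact ENNReal.toReal_mono ENNReal.one_ne_top prob_le_one

lemma G_anti : Antitone (fun x => (ν (Ioi x)).toReal) := fun x y hxy =>
  ENNReal.toReal_mono (measure_ne_top ν _) (measure_mono (Ioi_subset_Ioi hxy))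

include hm in
lemma G_eq_one {x : ℝ} (hx : x < m) : (ν (Ioi x)).toReal = 1 := by
  have h1 : ν (Ici m) = 1 := by
    have := measure_compl (measurableSet_Iio : MeasurableSet (Iio m)) (measure_ne_top ν _)
    rw [hm, compl_Iio, measure_univ] at this
    simpa using this
  have h2 : (1:ℝ≥0∞) ≤ ν (Ioi x) := h1 ▸ measure_mono (Ici_subset_Ioi.2 hx)
  have := G_le_one ν x
  have h3 : (1:ℝ) ≤ (ν (Ioi x)).toReal := by
    rw [← ENNReal.toReal_one]
    exact ENNReal.toReal_mono (measure_ne_top ν _) h2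
  linarith

include hm in
lemma S_nonempty {s : ℝ} (hs : s < 1) : {x : ℝ | s < (ν (Ioi x)).toReal}.Nonempty :=
  ⟨m - 1, by simp only [mem_setOf_eq, G_eq_one ν hm (by linarith : m - 1 < m)]; linarith⟩

lemma S_bdd {s : ℝ} (hs : 0 < s) : BddAbove {x : ℝ | s < (ν (Ioi x)).toReal} := by
  have h0 : Tendsto (fun n : ℕ => ν (Ioi (n : ℝ))) atTop (𝓝 (ν (⋂ n : ℕ, Ioi (n : ℝ)))) :=
    tendsto_measure_iInter_atTop (fun n => (measurableSet_Ioi).nullMeasurableSet)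
      (fun i j hij => Ioi_subset_Ioi (by exact_mod_cast hij)) ⟨0, measure_ne_top ν _⟩
  have hempty : (⋂ n : ℕ, Ioi ((n : ℝ))) = ∅ := by
    ext x; simp only [mem_iInter, mem_Ioi, mem_empty_iff_false, iff_false, not_forall, not_lt]
    obtain ⟨n, hn⟩ := exists_nat_ge x; exact ⟨n, hn⟩
  rw [hempty, measure_empty] at h0
  have := h0.eventually (eventually_lt_nhds (by simpa using ENNReal.ofReal_pos.2 hs : (0:ℝ≥0∞) < ENNReal.ofReal s))
  obtain ⟨n, hn⟩ := this.exists
  refine ⟨n, fun x hx => ?_⟩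
  by_contra hxn
  push_neg at hxn
  have : ν (Ioi x) ≤ ν (Ioi (n:ℝ)) := measure_mono (Ioi_subset_Ioi hxn.le)
  have hlt : ν (Ioi x) < ENNReal.ofReal s := lt_of_le_of_lt this hn
  have : (ν (Ioi x)).toReal < s := ENNReal.toReal_lt_of_lt_ofReal hlt
  exact absurd hx (not_lt.2 this.le)


include hm in
lemma Fstar_key {s : ℝ} (hs0 : 0 < s) (hs1 : s < 1) (x : ℝ) :
    x < Fstar ν s ↔ s < (ν (Ioi x)).toReal := by
  constructor
  · intro hx
    obtain ⟨y, hy, hxy⟩ := exists_lt_of_lt_csSup (S_nonempty ν hm hs1) hx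
    exact lt_of_lt_of_le hy (G_anti ν hxy.le)
  · intro hG
    have hueq : Ioi x = ⋃ n : ℕ, Ioi (x + 1/(n+1)) := by
      ext y
      simp only [mem_Ioi, mem_iUnion]
      constructor
      · intro hy
        obtain ⟨n, hn⟩ := exists_nat_one_div_lt (show (0:ℝ) < y - x by linarith)
        exact ⟨n, by linarith⟩
      · rintro ⟨n, hn⟩
        have : (0:ℝ) < 1/(n+1) := by positivity
        linarith
    have hdir : Directed (· ⊆ ·) (fun n : ℕ => Ioi (x + 1/((n:ℝ)+1))) := by
      apply Monotone.directed_le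
      intro i j hij
      apply Ioi_subset_Ioi
      have : (1:ℝ)/((j:ℝ)+1) ≤ 1/((i:ℝ)+1) := by
        apply one_div_le_one_div_of_le (by positivity)
        have hij' : (i:ℝ) ≤ (j:ℝ) := Nat.cast_le.2 hij
        linarith
      linarith
    have hsup : ν (Ioi x) = ⨆ n : ℕ, ν (Ioi (x + 1/((n:ℝ)+1))) := by
      rw [hueq]; exact hdir.measure_iUnion
    have hofr : ENNReal.ofReal s < ν (Ioi x) := by
      rw [ENNReal.ofReal_lt_iff_lt_toReal hs0.le (measure_ne_top ν _)] at *
      exact hG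
    rw [hsup, lt_iSup_iff] at hofr
    obtain ⟨n, hn⟩ := hofr
    have hy : s < (ν (Ioi (x + 1/((n:ℝ)+1)))).toReal := by
      have := ENNReal.toReal_strict_mono (measure_ne_top ν _) hn
      rwa [ENNReal.toReal_ofReal hs0.le] at this
    have hmem : (x + 1/((n:ℝ)+1)) ∈ {x : ℝ | s < (ν (Ioi x)).toReal} := hy
    have hle := le_csSup (S_bdd ν hs0) hmem
    have : (0:ℝ) < 1/((n:ℝ)+1) := by positivity
    calc x < x + 1/((n:ℝ)+1) := by linarith
    _ ≤ Fstar ν s := hle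

include hm in
lemma Fstar_lb {s : ℝ} (hs0 : 0 < s) (hs1 : s < 1) : m ≤ Fstar ν s := by
  refine le_of_forall_lt fun c hc => ?_
  exact (Fstar_key ν hm hs0 hs1 c).2 (by rw [G_eq_one ν hm hc]; exact hs1)

include hm in
lemma Fstar_anti {s s' : ℝ} (hs0 : 0 < s) (hss' : s ≤ s') (hs1 : s' < 1) :
    Fstar ν s' ≤ Fstar ν s :=
  csSup_le_csSup (S_bdd ν hs0) (S_nonempty ν hm hs1)
    (fun x hx => lt_of_le_of_lt hss' hx)

include hm in
lemma Fstar_preimage (x : ℝ) :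
    {s : ℝ | s ∈ Ioo (0:ℝ) 1 ∧ x < Fstar ν s} = Ioo 0 (ν (Ioi x)).toReal := by
  ext s
  simp only [mem_setOf_eq, mem_Ioo]
  constructor
  · rintro ⟨⟨h0, h1⟩, hx⟩
    exact ⟨h0, (Fstar_key ν hm h0 h1 x).1 hx⟩
  · rintro ⟨h0, hG⟩
    have h1 : s < 1 := lt_of_lt_of_le hG (G_le_one ν x)
    exact ⟨⟨h0, h1⟩, (Fstar_key ν hm h0 h1 x).2 hG⟩


include hm in
lemma Fstar_indicator_meas : Measurable ((Ioo (0:ℝ) 1).indicator (Fstar ν)) := by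
  apply measurable_of_Ioi
  intro x
  by_cases hx : x < 0
  · have : (Ioo (0:ℝ) 1).indicator (Fstar ν) ⁻¹' Ioi x
        = Ioo 0 (ν (Ioi x)).toReal ∪ (Ioo (0:ℝ) 1)ᶜ := by
      ext s
      by_cases hs : s ∈ Ioo (0:ℝ) 1
      · simp only [mem_preimage, mem_Ioi, indicator_of_mem hs, mem_union, mem_compl_iff, hs,
          not_true_eq_false, or_false]
        rw [← Fstar_preimage ν hm x]
        simp only [mem_setOf_eq, hs, true_and]
      · simp [indicator_of_notMem hs, hx, hs]
    rw [this]
    exact (measurableSet_Ioo.union measurableSet_Ioo.compl)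
  · have : (Ioo (0:ℝ) 1).indicator (Fstar ν) ⁻¹' Ioi x = Ioo 0 (ν (Ioi x)).toReal := by
      ext s
      by_cases hs : s ∈ Ioo (0:ℝ) 1
      · simp only [mem_preimage, mem_Ioi, indicator_of_mem hs]
        rw [← Fstar_preimage ν hm x]
        simp only [mem_setOf_eq, hs, true_and]
      · simp only [mem_preimage, mem_Ioi, indicator_of_notMem hs]
        constructor
        · intro h; exact absurd h (by simpa using hx)
        · intro h
          rw [← Fstar_preimage ν hm x] at h
          exact absurd h.1 hs
    rw [this]
    exact measurableSet_Ioo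

include hm in
lemma Fstar_aemeas : AEMeasurable (Fstar ν) (volume.restrict (Ioo (0:ℝ) 1)) :=
  ⟨(Ioo (0:ℝ) 1).indicator (Fstar ν), Fstar_indicator_meas ν hm,
    (indicator_ae_eq_restrict measurableSet_Ioo).symm⟩

include hm in
lemma lint_eq :
    ∫⁻ s in Ioo (0:ℝ) 1, ENNReal.ofReal (max (Fstar ν s) 0)
      = ∫⁻ x, ENNReal.ofReal (max x 0) ∂ν := by
  have hL := lintegral_eq_lintegral_meas_lt (volume.restrict (Ioo (0:ℝ) 1))
    (f := fun s => max (Fstar ν s) 0) (Eventually.of_forall fun s => le_max_right _ _)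
    ((Fstar_aemeas ν hm).max aemeasurable_const)
  have hR := lintegral_eq_lintegral_meas_lt ν (f := fun x => max x 0)
    (Eventually.of_forall fun x => le_max_right _ _)
    (aemeasurable_id.max aemeasurable_const)
  rw [hL, hR]
  apply setLIntegral_congr_fun measurableSet_Ioi
  intro t ht
  have h1 : volume.restrict (Ioo (0:ℝ) 1) {s | t < max (Fstar ν s) 0} = ν (Ioi t) := by
    rw [Measure.restrict_apply' measurableSet_Ioo]
    have : {s | t < max (Fstar ν s) 0} ∩ Ioo (0:ℝ) 1
        = {s : ℝ | s ∈ Ioo (0:ℝ) 1 ∧ t < Fstar ν s} := by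
      ext s
      simp only [mem_inter_iff, mem_setOf_eq, lt_max_iff]
      constructor
      · rintro ⟨h | h, hs⟩
        · exact ⟨hs, h⟩
        · exact absurd ht (by simpa using h.le)
      · rintro ⟨hs, h⟩; exact ⟨Or.inl h, hs⟩
    rw [this, Fstar_preimage ν hm t, Real.volume_Ioo, sub_zero,
      ENNReal.ofReal_toReal (measure_ne_top ν _)]
  have h2 : ν {x | t < max x 0} = ν (Ioi t) := by
    congr 1
    ext x
    simp only [mem_setOf_eq, mem_Ioi, lt_max_iff]
    constructor
    · rintro (h | h)
      · exact h
      · exact absurd ht (by simpa using h.le)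
    · exact Or.inl
  exact h1.trans h2.symm


include hm in
theorem stmt1_aux : Pmax ν = ∫ x, max x 0 ∂ν := by

  classical
  set Fp : ℝ → ℝ := fun s => max (Fstar ν s) 0 with hFp
  set I : ℝ≥0∞ := ∫⁻ s in Ioo (0:ℝ) 1, ENNReal.ofReal (Fp s) with hI
  have hFp_aemeas : AEMeasurable Fp (volume.restrict (Ioo (0:ℝ) 1)) :=
    (Fstar_aemeas ν hm).max aemeasurable_const
  have hFp_nn : ∀ s, 0 ≤ Fp s := fun s => le_max_right _ _
  by_cases hItop : I = ⊤
  · -- infinite case : both sides are 0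
    have hRHS : ∫ x, max x 0 ∂ν = 0 := by
      apply integral_undef
      intro hint
      have hfin := hint.2
      rw [hasFiniteIntegral_iff_ofReal (f := fun a : ℝ => max a 0) (Eventually.of_forall fun x => le_max_right _ _)] at hfin
      rw [hI, lint_eq ν hm] at hItop
      exact absurd hItop (ne_top_of_lt hfin)
    have hPf : ∀ t ∈ Ico (0:ℝ) 1, Pfun ν t = 0 := by
      rintro t ⟨ht0, ht1⟩
      rcases eq_or_lt_of_le ht0 with h0 | h0
      · rw [Pfun, ← h0, Ioc_self, Measure.restrict_empty, integral_zero_measure]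
      · -- show not integrable on Ioc 0 t
        have hsplit : (Ioc (0:ℝ) t) ∪ (Ioo t 1) = Ioo (0:ℝ) 1 :=
          Ioc_union_Ioo_eq_Ioo h0.le ht1
        have hdisj : Disjoint (Ioc (0:ℝ) t) (Ioo t 1) := by
          apply Set.disjoint_left.2
          rintro s ⟨_, hs2⟩ ⟨hs3, _⟩
          exact absurd hs3 (not_lt.2 hs2)
        have htail : ∫⁻ s in Ioo t 1, ENNReal.ofReal (Fp s) ≠ ⊤ := by
          have hb : ∀ s ∈ Ioo t 1, ENNReal.ofReal (Fp s) ≤ ENNReal.ofReal (Fp t) := by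
            intro s hs
            apply ENNReal.ofReal_le_ofReal
            exact max_le_max (Fstar_anti ν hm h0 hs.1.le hs.2) le_rfl
          have hcalc : ∫⁻ s in Ioo t 1, ENNReal.ofReal (Fp s) < ⊤ := by
            calc ∫⁻ s in Ioo t 1, ENNReal.ofReal (Fp s)
                ≤ ∫⁻ _ in Ioo t 1, ENNReal.ofReal (Fp t) :=
                  setLIntegral_mono' measurableSet_Ioo hb
              _ = ENNReal.ofReal (Fp t) * volume (Ioo t 1) := setLIntegral_const _ _
              _ < ⊤ := ENNReal.mul_lt_top ENNReal.ofReal_lt_top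
                  (by rw [Real.volume_Ioo]; exact ENNReal.ofReal_lt_top)
          exact hcalc.ne
        have hhead : ∫⁻ s in Ioc (0:ℝ) t, ENNReal.ofReal (Fp s) = ⊤ := by
          by_contra hne
          have : I ≠ ⊤ := by
            rw [hI, ← hsplit, lintegral_union measurableSet_Ioo hdisj]
            exact ENNReal.add_ne_top.2 ⟨hne, htail⟩
          exact this hItop
        apply integral_undef
        intro hint
        have hfin := hint.2
        rw [hasFiniteIntegral_iff_norm] at hfin
        have hle : ∫⁻ s in Ioc (0:ℝ) t, ENNReal.ofReal (Fp s)
            ≤ ∫⁻ s in Ioc (0:ℝ) t, ENNReal.ofReal ‖Fstar ν s‖ := by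
          apply lintegral_mono
          intro s
          apply ENNReal.ofReal_le_ofReal
          exact max_le (le_abs_self _) (abs_nonneg _)
        rw [hhead] at hle
        exact absurd (top_le_iff.1 hle ▸ hfin) (lt_irrefl ⊤)
    rw [hRHS, Pmax]
    have : ∀ t : ℝ, (⨆ _ : t ∈ Ico (0:ℝ) 1, Pfun ν t) = 0 := by
      intro t
      by_cases ht : t ∈ Ico (0:ℝ) 1
      · rw [ciSup_pos ht]; exact hPf t ht
      · haveI : IsEmpty (t ∈ Ico (0:ℝ) 1) := ⟨ht⟩
        exact Real.iSup_of_isEmpty _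
    simp only [this, ciSup_const]
  · -- finite case
    have hIfin : I ≠ ⊤ := hItop
    have hFp_int : IntegrableOn Fp (Ioo (0:ℝ) 1) :=
      ⟨hFp_aemeas.aestronglyMeasurable,
        (hasFiniteIntegral_iff_ofReal (Eventually.of_forall hFp_nn)).2
          (lt_top_iff_ne_top.2 hIfin)⟩
    have hmax_int : Integrable (fun x : ℝ => max x 0) ν :=
      ⟨(measurable_id.max measurable_const).aestronglyMeasurable,
        (hasFiniteIntegral_iff_ofReal (f := fun a : ℝ => max a 0)
          (Eventually.of_forall fun x => le_max_right _ _)).2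
          (by rw [← lint_eq ν hm]; exact lt_top_iff_ne_top.2 hIfin)⟩
    set R := ∫ s in Ioo (0:ℝ) 1, Fp s with hR
    have hRHS : ∫ x, max x 0 ∂ν = R := by
      rw [integral_eq_lintegral_of_nonneg_ae (f := fun x : ℝ => max x 0)
        (Eventually.of_forall fun x => le_max_right _ _)
        (measurable_id.max measurable_const).aestronglyMeasurable, hR,
        integral_eq_lintegral_of_nonneg_ae (Eventually.of_forall fun s => hFp_nn s)
        hFp_aemeas.aestronglyMeasurable, ← lint_eq ν hm]
    have hR0 : 0 ≤ R := setIntegral_nonneg measurableSet_Ioo (fun s _ => hFp_nn s)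
    have habs : ∀ᵐ s ∂(volume.restrict (Ioo (0:ℝ) 1)), ‖Fstar ν s‖ ≤ Fp s + |m| := by
      rw [ae_restrict_iff' measurableSet_Ioo]
      refine Eventually.of_forall fun s hs => ?_
      have h1 : m ≤ Fstar ν s := Fstar_lb ν hm hs.1 hs.2
      have h2 : Fstar ν s ≤ Fp s := le_max_left _ _
      rw [Real.norm_eq_abs, abs_le]
      constructor
      · have h3 : -|m| ≤ m := neg_abs_le m
        have := hFp_nn s
        linarith
      · linarith [abs_nonneg m]
    have hFs_int : IntegrableOn (Fstar ν) (Ioo (0:ℝ) 1) :=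
      Integrable.mono' (hFp_int.add (integrable_const _))
        (Fstar_aemeas ν hm).aestronglyMeasurable habs
    set t0 := (ν (Ioi (0:ℝ))).toReal with ht0def
    have ht00 : 0 ≤ t0 := ENNReal.toReal_nonneg
    have ht01 : t0 ≤ 1 := G_le_one ν 0
    have hupper : ∀ t ∈ Ico (0:ℝ) 1, Pfun ν t ≤ R := by
      rintro t ⟨htl, ht1⟩
      have hsub : Ioc (0:ℝ) t ⊆ Ioo (0:ℝ) 1 := fun s hs => ⟨hs.1, lt_of_le_of_lt hs.2 ht1⟩
      have hint1 : IntegrableOn (Fstar ν) (Ioc (0:ℝ) t) := hFs_int.mono_set hsub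
      have hint2 : IntegrableOn Fp (Ioc (0:ℝ) t) := hFp_int.mono_set hsub
      calc Pfun ν t = ∫ s in Ioc (0:ℝ) t, Fstar ν s := rfl
        _ ≤ ∫ s in Ioc (0:ℝ) t, Fp s :=
            integral_mono hint1 hint2 (fun s => le_max_left _ _)
        _ ≤ R := setIntegral_mono_set hFp_int
            (Eventually.of_forall fun s => hFp_nn s)
            (HasSubset.Subset.eventuallyLE hsub)
    have hFp0 : ∀ s ∈ Ioo (0:ℝ) 1, t0 ≤ s → Fp s = 0 := by
      intro s hs hts
      have hns : ¬ (0 < Fstar ν s) := by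
        rw [Fstar_key ν hm hs.1 hs.2]
        exact not_lt.2 hts
      simp only [hFp]
      exact max_eq_right (not_lt.1 hns)
    have hFpF : ∀ s ∈ Ioo (0:ℝ) t0, Fp s = Fstar ν s := by
      intro s hs
      have hs1 : s < 1 := lt_of_lt_of_le hs.2 ht01
      have hpos : 0 < Fstar ν s := (Fstar_key ν hm hs.1 hs1 0).2 hs.2
      simp only [hFp]
      exact max_eq_left hpos.le
    have hsub0 : Ioo (0:ℝ) t0 ⊆ Ioo (0:ℝ) 1 := fun s hs => ⟨hs.1, lt_of_lt_of_le hs.2 ht01⟩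
    have hRsplit : R = ∫ s in Ioo (0:ℝ) t0, Fstar ν s := by
      have hun : Ioo (0:ℝ) t0 ∪ (Ioo (0:ℝ) 1 \ Ioo (0:ℝ) t0) = Ioo (0:ℝ) 1 :=
        union_diff_cancel hsub0
      have hdisj : Disjoint (Ioo (0:ℝ) t0) (Ioo (0:ℝ) 1 \ Ioo (0:ℝ) t0) :=
        disjoint_sdiff_right
      rw [hR, ← hun, setIntegral_union hdisj (measurableSet_Ioo.diff measurableSet_Ioo)
        (hFp_int.mono_set hsub0) (hFp_int.mono_set diff_subset)]
      have h2 : ∫ s in (Ioo (0:ℝ) 1 \ Ioo (0:ℝ) t0), Fp s = 0 := by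
        rw [setIntegral_congr_fun (measurableSet_Ioo.diff measurableSet_Ioo)
          (g := fun _ => (0:ℝ)) ?_, integral_zero]
        intro s hs
        refine hFp0 s hs.1 ?_
        by_contra hlt
        push_neg at hlt
        exact hs.2 ⟨hs.1.1, hlt⟩
      rw [h2, add_zero]
      exact setIntegral_congr_fun measurableSet_Ioo hFpF
    set b : ℕ → ℝ := fun n => t0 - t0/(n+1) with hb
    have hb_nn : ∀ n, 0 ≤ b n := by
      intro n
      simp only [hb, sub_nonneg]
      apply div_le_self ht00
      have : (0:ℝ) ≤ (n:ℝ) := Nat.cast_nonneg n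
      linarith
    have hb_mono : Monotone b := by
      intro i j hij
      simp only [hb]
      have hij' : (i:ℝ) ≤ (j:ℝ) := Nat.cast_le.2 hij
      have h1 : t0/((j:ℝ)+1) ≤ t0/((i:ℝ)+1) :=
        div_le_div_of_nonneg_left ht00 (by positivity) (by linarith)
      linarith
    have hb_subset : ∀ n, Ioc (0:ℝ) (b n) ⊆ Ioo (0:ℝ) t0 := by
      intro n s hs
      have hs0 : 0 < s := hs.1
      have hbn : 0 < b n := lt_of_lt_of_le hs0 hs.2
      have ht0pos : 0 < t0 := by
        rcases ht00.lt_or_eq with h | h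
        · exact h
        · exfalso
          have hb0 : b n = 0 := by simp [hb, ← h]
          rw [hb0] at hbn
          exact lt_irrefl 0 hbn
      have : b n < t0 := by
        simp only [hb, sub_lt_self_iff]
        exact div_pos ht0pos (by positivity)
      exact ⟨hs0, lt_of_le_of_lt hs.2 this⟩
    have hUnion : ⋃ n, Ioc (0:ℝ) (b n) = Ioo (0:ℝ) t0 := by
      apply Subset.antisymm
      · exact iUnion_subset hb_subset
      · intro s hs
        have ht0pos : 0 < t0 := lt_trans hs.1 hs.2
        obtain ⟨n, hn⟩ := exists_nat_one_div_lt
          (show (0:ℝ) < (t0 - s)/t0 from div_pos (by linarith [hs.2]) ht0pos)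
        refine mem_iUnion.2 ⟨n, hs.1, ?_⟩
        have h3 : t0/((n:ℝ)+1) = t0 * (1/((n:ℝ)+1)) := by ring
        have h4 : t0 * (1/((n:ℝ)+1)) < t0 * ((t0 - s)/t0) := by
          apply mul_lt_mul_of_pos_left hn ht0pos
        have h5 : t0 * ((t0 - s)/t0) = t0 - s := by
          field_simp
        simp only [hb]
        linarith [h3 ▸ h4.trans_eq h5]
      
    have htendsto : Tendsto (fun n => ∫ s in Ioc (0:ℝ) (b n), Fstar ν s) atTop (𝓝 R) := by
      have := tendsto_setIntegral_of_monotone (μ := volume) (f := Fstar ν)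
        (s := fun n => Ioc (0:ℝ) (b n)) (fun n => measurableSet_Ioc)
        (fun i j hij => Ioc_subset_Ioc_right (hb_mono hij))
        (by rw [hUnion]; exact hFs_int.mono_set hsub0)
      rw [hUnion, ← hRsplit] at this
      exact this
    have hb_mem : ∀ n, b n ∈ Ico (0:ℝ) 1 := by
      intro n
      refine ⟨hb_nn n, ?_⟩
      rcases eq_or_lt_of_le ht00 with h0 | h0
      · simp only [hb, ← h0]
        norm_num
      · have : b n < t0 := by
          simp only [hb, sub_lt_self_iff]
          exact div_pos h0 (by positivity)
        exact lt_of_lt_of_le this ht01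
    have hbdd : BddAbove (range fun t => ⨆ _ : t ∈ Ico (0:ℝ) 1, Pfun ν t) := by
      refine ⟨max R 0, ?_⟩
      rintro _ ⟨t, rfl⟩
      dsimp only
      by_cases ht : t ∈ Ico (0:ℝ) 1
      · rw [ciSup_pos ht]
        exact le_max_of_le_left (hupper t ht)
      · haveI : IsEmpty (t ∈ Ico (0:ℝ) 1) := ⟨ht⟩
        rw [Real.iSup_of_isEmpty]
        exact le_max_right _ _
    have hle1 : Pmax ν ≤ R := by
      show (⨆ t ∈ Ico (0:ℝ) 1, Pfun ν t) ≤ R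
      apply ciSup_le
      intro t
      by_cases ht : t ∈ Ico (0:ℝ) 1
      · rw [ciSup_pos ht]
        exact hupper t ht
      · haveI : IsEmpty (t ∈ Ico (0:ℝ) 1) := ⟨ht⟩
        rw [Real.iSup_of_isEmpty]
        exact hR0
    have hle2 : R ≤ Pmax ν := by
      refine le_of_tendsto htendsto (Eventually.of_forall fun n => ?_)
      have h1 : (⨆ _ : b n ∈ Ico (0:ℝ) 1, Pfun ν (b n)) ≤ Pmax ν :=
        le_ciSup hbdd (b n)
      rwa [ciSup_pos (hb_mem n)] at h1
    rw [hRHS]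
    exact le_antisymm hle1 hle2

end Aux

/-- Lemma 7.1: for a Borel probability measure `ν` on `ℝ` whose support is bounded from
below, `max_{t∈[0,1)} P(ν)(t) = ∫ x₊ ν(dx)`. -/
theorem stmt1 (ν : Measure ℝ) [IsProbabilityMeasure ν]
    (h : ∃ m : ℝ, ν (Iio m) = 0) :
    Pmax ν = ∫ x, max x 0 ∂ν := by
  obtain ⟨m, hm⟩ := h
  exact stmt1_aux ν hm
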